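/- arXiv:1709.03700 — 9 statements merged into one kernel-verified Lean document; each statement's English description precedes it below -/
import Mathlib

section
/- Let X be a d-space and let F be a nonempty irreducible closed subset of X. If F is a down-linear element of the poset Irr(X) of nonempty irreducible closed sets ordered by inclusion (i.e., the set of irreducible closed subsets contained in F forms a chain), then F = cl({x}) for some point x ∈ X. -/
/-- The specialization order: `x ≤ y` iff `x ∈ cl({y})`. -/
def sle {X : Type*} [TopologicalSpace X] (x y : X) : Prop := x ∈ closure {y}

/-- `s` is the supremum of `D` with respect to the specialization order. -/
def sIsLUB {X : Type*} [TopologicalSpace X] (D : Set X) (s : X) : Prop :=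
  (∀ d ∈ D, sle d s) ∧ ∀ b, (∀ d ∈ D, sle d b) → sle s b

/-- A d-space (monotone convergence space): `T₀`, the specialization order is
directed complete, and every directed set converges (as a net) to its supremum. -/
def IsDSpace (X : Type*) [TopologicalSpace X] : Prop :=
  T0Space X ∧
  (∀ D : Set X, D.Nonempty → DirectedOn sle D → ∃ s, sIsLUB D s) ∧
  (∀ D : Set X, D.Nonempty → DirectedOn sle D → ∀ s, sIsLUB D s →
    ∀ U : Set X, IsOpen U → s ∈ U → ∃ d ∈ D, ∀ e ∈ D, sle d e → e ∈ U)

/-- The poset of nonempty irreducible closed subsets, ordered by inclusion. -/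
abbrev Irr (X : Type*) [TopologicalSpace X] := {F : Set X // IsClosed F ∧ IsIrreducible F}

/-- in a d-space, every down-linear element `F` of `Irr(X)` is the closure
of a point. -/
theorem stmt3 {X : Type*} [TopologicalSpace X] (hX : IsDSpace X)
    (F : Irr X) (hdl : IsChain (· ≤ ·) {G : Irr X | G ≤ F}) :
    ∃ x : X, (F : Set X) = closure {x} := by
  obtain ⟨Fs, hFc, hFi⟩ := F
  obtain ⟨_, hsup, hconv⟩ := hX
  -- point closures inside F
  have hptcl : ∀ x ∈ Fs, closure ({x} : Set X) ⊆ Fs := fun x hx =>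
    closure_minimal (Set.singleton_subset_iff.2 hx) hFc
  have hmem : ∀ x ∈ Fs, (⟨closure {x}, isClosed_closure, isIrreducible_singleton.closure⟩ : Irr X)
      ∈ {G : Irr X | G ≤ ⟨Fs, hFc, hFi⟩} := fun x hx => hptcl x hx
  -- F is a chain, hence directed, under sle
  have hdir : DirectedOn sle Fs := by
    intro x hx y hy
    rcases eq_or_ne (closure ({x} : Set X)) (closure ({y} : Set X)) with h | h
    · exact ⟨y, hy, by rw [sle, ← h]; exact subset_closure rfl, subset_closure rfl⟩
    · rcases hdl (hmem x hx) (hmem y hy) (by simpa using h) with h' | h'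
      · exact ⟨y, hy, h' (subset_closure rfl), subset_closure rfl⟩
      · exact ⟨x, hx, subset_closure rfl, h' (subset_closure rfl)⟩
  obtain ⟨s, hs⟩ := hsup Fs hFi.nonempty hdir
  refine ⟨s, subset_antisymm (fun x hx => hs.1 x hx) ?_⟩
  have hsF : s ∈ Fs := by
    rw [← hFc.closure_eq, mem_closure_iff]
    intro U hU hsU
    obtain ⟨d, hd, hd2⟩ := hconv Fs hFi.nonempty hdir s hs U hU hsU
    exact ⟨d, hd2 d hd (subset_closure rfl), hd⟩
  exact hptcl s hsF
end

section
/- Let X be a d-space and let F ∈ Irr(X) be the supremum in Irr(X) of a directed family of down-linear elements of Irr(X). Then F = cl({x}) for some x ∈ X. -/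
lemma sle_refl' {X : Type*} [TopologicalSpace X] (x : X) : sle x x := subset_closure rfl

lemma sle_iff {X : Type*} [TopologicalSpace X] {x y : X} :
    sle x y ↔ closure {x} ⊆ closure ({y} : Set X) := by
  constructor
  · intro h
    exact closure_minimal (Set.singleton_subset_iff.2 h) isClosed_closure
  · intro h
    exact h (subset_closure rfl)

/-- in a d-space, if `F ∈ Irr(X)` is the supremum of a directed family of
down-linear elements of `Irr(X)`, then `F` is the closure of a point. -/
theorem stmt4 {X : Type*} [TopologicalSpace X] (hX : IsDSpace X)
    (F : Irr X) (𝒟 : Set (Irr X)) (hne : 𝒟.Nonempty)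
    (hdir : DirectedOn (· ≤ ·) 𝒟)
    (hdl : ∀ G ∈ 𝒟, IsChain (· ≤ ·) {H : Irr X | H ≤ G})
    (hsup : IsLUB 𝒟 F) :
    ∃ x : X, (F : Set X) = closure {x} := by
  obtain ⟨hT0, hdc, hconv⟩ := hX
  -- a closed set contains the sup of any directed subset
  have key : ∀ (C : Set X), IsClosed C → ∀ D : Set X, D.Nonempty → DirectedOn sle D →
      D ⊆ C → ∀ s, sIsLUB D s → s ∈ C := by
    intro C hC D hDne hDdir hDC s hs
    by_contra hsc
    obtain ⟨d, hd, hd2⟩ := hconv D hDne hDdir s hs Cᶜ hC.isOpen_compl hsc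
    exact hd2 d hd (sle_refl' d) (hDC hd)
  -- each member of 𝒟 is the closure of one of its points
  have hpt : ∀ G ∈ 𝒟, ∃ x ∈ (G : Set X), (G : Set X) = closure {x} := by
    intro G hG
    have hGdir : DirectedOn sle (G : Set X) := by
      intro x hx y hy
      have hx' : (⟨closure {x}, isClosed_closure, isIrreducible_singleton.closure⟩ : Irr X)
          ∈ {H : Irr X | H ≤ G} :=
        closure_minimal (Set.singleton_subset_iff.2 hx) G.2.1
      have hy' : (⟨closure {y}, isClosed_closure, isIrreducible_singleton.closure⟩ : Irr X)
          ∈ {H : Irr X | H ≤ G} :=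
        closure_minimal (Set.singleton_subset_iff.2 hy) G.2.1
      by_cases heq : closure ({x} : Set X) = closure ({y} : Set X)
      · exact ⟨y, hy, sle_iff.2 heq.le, sle_refl' y⟩
      · have hne' : (⟨closure {x}, isClosed_closure, isIrreducible_singleton.closure⟩ : Irr X) ≠
            ⟨closure {y}, isClosed_closure, isIrreducible_singleton.closure⟩ := by
          simpa [Subtype.ext_iff] using heq
        rcases hdl G hG hx' hy' hne' with h | h
        · exact ⟨y, hy, sle_iff.2 h, sle_refl' y⟩
        · exact ⟨x, hx, sle_refl' x, sle_iff.2 h⟩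
    obtain ⟨s, hs⟩ := hdc (G : Set X) G.2.2.1 hGdir
    have hsG : s ∈ (G : Set X) := key _ G.2.1 _ G.2.2.1 hGdir le_rfl s hs
    refine ⟨s, hsG, le_antisymm ?_ (closure_minimal (Set.singleton_subset_iff.2 hsG) G.2.1)⟩
    intro x hx
    exact hs.1 x hx
  -- the set of chosen points
  set S : Set X := {x | ∃ G ∈ 𝒟, x ∈ (G : Set X) ∧ (G : Set X) = closure {x}} with hS
  have hSne : S.Nonempty := by
    obtain ⟨G, hG⟩ := hne
    obtain ⟨x, hx, hx'⟩ := hpt G hG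
    exact ⟨x, G, hG, hx, hx'⟩
  have hSdir : DirectedOn sle S := by
    rintro x ⟨G, hG, hxG, hGx⟩ y ⟨G', hG', hyG, hGy⟩
    obtain ⟨H, hH, hGH, hGH'⟩ := hdir G hG G' hG'
    obtain ⟨z, hzH, hHz⟩ := hpt H hH
    refine ⟨z, ⟨H, hH, hzH, hHz⟩, ?_, ?_⟩
    · have : x ∈ (H : Set X) := hGH hxG
      rw [hHz] at this; exact this
    · have : y ∈ (H : Set X) := hGH' hyG
      rw [hHz] at this; exact this
  obtain ⟨s, hs⟩ := hdc S hSne hSdir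
  refine ⟨s, le_antisymm ?_ ?_⟩
  · -- F ⊆ cl{s} : cl{s} is an upper bound of 𝒟 in Irr X
    have hub : (⟨closure {s}, isClosed_closure, isIrreducible_singleton.closure⟩ : Irr X)
        ∈ upperBounds 𝒟 := by
      intro G hG
      obtain ⟨x, hxG, hGx⟩ := hpt G hG
      have hxS : x ∈ S := ⟨G, hG, hxG, hGx⟩
      have : closure ({x} : Set X) ⊆ closure {s} := sle_iff.1 (hs.1 x hxS)
      show (G : Set X) ⊆ closure {s}
      rw [hGx]; exact this
    exact hsup.2 hub
  · -- cl{s} ⊆ F : s ∈ F since S ⊆ F and F is closed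
    have hSF : S ⊆ (F : Set X) := by
      rintro x ⟨G, hG, hxG, -⟩
      exact hsup.1 hG hxG
    have hsF : s ∈ (F : Set X) := key _ F.2.1 S hSne hSdir hSF s hs
    exact closure_minimal (Set.singleton_subset_iff.2 hsF) F.2.1
end

section
/- Let P be a dcpo whose Scott topology is sober and let Q be a dcpo whose Scott topology is bounded-sober. If the lattices of Scott closed subsets C_σ(P) and C_σ(Q) are order isomorphic, then P and Q are order isomorphic. -/
/-- A directed complete poset. -/
def Dcpo (P : Type*) [PartialOrder P] : Prop :=
  ∀ D : Set P, D.Nonempty → DirectedOn (· ≤ ·) D → ∃ a, IsLUB D a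

/-- A Scott closed set: a lower set closed under suprema of directed subsets. -/
def ScottClosed {P : Type*} [PartialOrder P] (A : Set P) : Prop :=
  IsLowerSet A ∧ ∀ D ⊆ A, D.Nonempty → DirectedOn (· ≤ ·) D → ∀ a, IsLUB D a → a ∈ A

/-- A nonempty irreducible Scott closed set. -/
def IrrClosed {P : Type*} [PartialOrder P] (A : Set P) : Prop :=
  A.Nonempty ∧ ScottClosed A ∧
    ∀ F₁ F₂ : Set P, ScottClosed F₁ → ScottClosed F₂ → A ⊆ F₁ ∪ F₂ → A ⊆ F₁ ∨ A ⊆ F₂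

/-- The lattice `C_σ(P)` of Scott closed subsets, ordered by inclusion. -/
abbrev Cσ (P : Type*) [PartialOrder P] := {A : Set P // ScottClosed A}

/-- The poset `Irr_σ(P)` of nonempty irreducible Scott closed subsets. -/
abbrev Irrσ (P : Type*) [PartialOrder P] := {A : Set P // IrrClosed A}

/-- An element is down-linear if its principal downset is a chain. -/
def DownLinear {P : Type*} [PartialOrder P] (a : P) : Prop :=
  IsChain (· ≤ ·) (Set.Iic a)

/-- A dcpo is sober if every nonempty irreducible Scott closed set is the Scott closure
(= principal downset) of a unique point. -/
def SoberD (P : Type*) [PartialOrder P] : Prop :=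
  ∀ A : Set P, IrrClosed A → ∃! x, A = Set.Iic x

/-- A dcpo is bounded-sober if every upper-bounded nonempty irreducible Scott closed set
is the principal downset of a point. -/
def BoundedSoberD (P : Type*) [PartialOrder P] : Prop :=
  ∀ A : Set P, IrrClosed A → (∃ b, ∀ x ∈ A, x ≤ b) → ∃ x, A = Set.Iic x

section Aux

variable {P : Type*} [PartialOrder P]

lemma scottClosed_Iic (x : P) : ScottClosed (Set.Iic x) := by
  constructor
  · intro a b hba ha
    exact le_trans hba ha
  · intro D hD _ _ a ha
    exact ha.2 fun d hd => hD hd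

lemma irrClosed_Iic (x : P) : IrrClosed (Set.Iic x) := by
  refine ⟨⟨x, le_refl x⟩, scottClosed_Iic x, ?_⟩
  intro F₁ F₂ h₁ h₂ hsub
  rcases hsub (le_refl x : x ∈ Set.Iic x) with hx | hx
  · exact Or.inl fun z hz => h₁.1 hz hx
  · exact Or.inr fun z hz => h₂.1 hz hx

lemma scottClosed_empty : ScottClosed (∅ : Set P) := by
  constructor
  · intro a b _ h
    exact absurd h (Set.notMem_empty a)
  · intro D hD hne _ _ _
    obtain ⟨d, hd⟩ := hne
    exact absurd (hD hd) (Set.notMem_empty d)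

lemma cofinal_lub {D E : Set P} (hE : E ⊆ D) (hcof : ∀ d ∈ D, ∃ e ∈ E, d ≤ e)
    (hD : DirectedOn (· ≤ ·) D) (hne : D.Nonempty) {a : P} (ha : IsLUB D a) :
    E.Nonempty ∧ DirectedOn (· ≤ ·) E ∧ IsLUB E a := by
  refine ⟨?_, ?_, ?_, ?_⟩
  · obtain ⟨d, hd⟩ := hne
    obtain ⟨e, he, -⟩ := hcof d hd
    exact ⟨e, he⟩
  · intro x hx y hy
    obtain ⟨z, hz, hxz, hyz⟩ := hD x (hE hx) y (hE hy)
    obtain ⟨w, hw, hzw⟩ := hcof z hz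
    exact ⟨w, hw, le_trans hxz hzw, le_trans hyz hzw⟩
  · intro x hx
    exact ha.1 (hE hx)
  · intro b hb
    refine ha.2 fun d hd => ?_
    obtain ⟨e, he, hde⟩ := hcof d hd
    exact le_trans hde (hb he)

lemma scottClosed_union {A B : Set P} (hA : ScottClosed A) (hB : ScottClosed B) :
    ScottClosed (A ∪ B) := by
  constructor
  · exact hA.1.union hB.1
  · intro D hD hne hdir a ha
    by_cases hcof : ∀ d ∈ D, ∃ e ∈ D ∩ A, d ≤ e
    · obtain ⟨hne', hdir', ha'⟩ := cofinal_lub Set.inter_subset_left hcof hdir hne ha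
      exact Or.inl (hA.2 (D ∩ A) Set.inter_subset_right hne' hdir' a ha')
    · push_neg at hcof
      obtain ⟨d₁, hd₁, hd₁'⟩ := hcof
      have hcof' : ∀ d ∈ D, ∃ e ∈ D ∩ B, d ≤ e := by
        intro d hd
        obtain ⟨c, hc, hdc, hd₁c⟩ := hdir d hd d₁ hd₁
        rcases hD hc with hcA | hcB
        · exact absurd hd₁c (hd₁' c ⟨hc, hcA⟩)
        · exact ⟨c, ⟨hc, hcB⟩, hdc⟩
      obtain ⟨hne', hdir', ha'⟩ := cofinal_lub Set.inter_subset_left hcof' hdir hne ha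
      exact Or.inr (hB.2 (D ∩ B) Set.inter_subset_right hne' hdir' a ha')

variable {Q : Type*} [PartialOrder Q]

/-- An order isomorphism of the Scott closed set lattices sends irreducible
closed sets to irreducible closed sets. -/
lemma irr_map (e : Cσ P ≃o Cσ Q) {A : Cσ P} (hA : IrrClosed A.1) :
    IrrClosed (e A).1 := by
  refine ⟨?_, (e A).2, ?_⟩
  · -- nonempty
    rw [Set.nonempty_iff_ne_empty]
    intro hemp
    have h1 : e A ≤ e ⟨∅, scottClosed_empty⟩ := by
      show (e A).1 ⊆ _
      rw [hemp]
      exact Set.empty_subset _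
    have h2 : A ≤ ⟨∅, scottClosed_empty⟩ := e.map_rel_iff.mp h1
    obtain ⟨x, hx⟩ := hA.1
    exact absurd (h2 hx) (Set.notMem_empty x)
  · intro F₁ F₂ h₁ h₂ hsub
    set G₁ : Cσ P := e.symm ⟨F₁, h₁⟩ with hG₁
    set G₂ : Cσ P := e.symm ⟨F₂, h₂⟩ with hG₂
    set K : Cσ P := ⟨G₁.1 ∪ G₂.1, scottClosed_union G₁.2 G₂.2⟩ with hK
    have hFK : (⟨F₁ ∪ F₂, scottClosed_union h₁ h₂⟩ : Cσ Q) ≤ e K := by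
      have hK1 : (⟨F₁, h₁⟩ : Cσ Q) ≤ e K := by
        rw [show (⟨F₁, h₁⟩ : Cσ Q) = e G₁ from (e.apply_symm_apply _).symm]
        exact e.map_rel_iff.mpr (Set.subset_union_left : G₁.1 ⊆ K.1)
      have hK2 : (⟨F₂, h₂⟩ : Cσ Q) ≤ e K := by
        rw [show (⟨F₂, h₂⟩ : Cσ Q) = e G₂ from (e.apply_symm_apply _).symm]
        exact e.map_rel_iff.mpr (Set.subset_union_right : G₂.1 ⊆ K.1)
      exact Set.union_subset hK1 hK2
    have hAK : A.1 ⊆ G₁.1 ∪ G₂.1 := by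
      have : e A ≤ e K := le_trans hsub hFK
      exact e.map_rel_iff.mp this
    rcases hA.2.2 G₁.1 G₂.1 G₁.2 G₂.2 hAK with h | h
    · left
      have : e A ≤ ⟨F₁, h₁⟩ := by
        rw [show (⟨F₁, h₁⟩ : Cσ Q) = e G₁ from (e.apply_symm_apply _).symm]
        exact e.map_rel_iff.mpr h
      exact this
    · right
      have : e A ≤ ⟨F₂, h₂⟩ := by
        rw [show (⟨F₂, h₂⟩ : Cσ Q) = e G₂ from (e.apply_symm_apply _).symm]
        exact e.map_rel_iff.mpr h
      exact this

/-- The induced order isomorphism between the posets of irreducible closed sets. -/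
noncomputable def irrIso (e : Cσ P ≃o Cσ Q) : Irrσ P ≃o Irrσ Q where
  toFun A := ⟨(e ⟨A.1, A.2.2.1⟩).1, irr_map e A.2⟩
  invFun B := ⟨(e.symm ⟨B.1, B.2.2.1⟩).1, irr_map e.symm B.2⟩
  left_inv A := by
    apply Subtype.ext
    show (e.symm ⟨(e ⟨A.1, A.2.2.1⟩).1, _⟩).1 = A.1
    rw [show (⟨(e ⟨A.1, A.2.2.1⟩).1, (irr_map e A.2).2.1⟩ : Cσ Q)
        = e ⟨A.1, A.2.2.1⟩ from Subtype.ext rfl, e.symm_apply_apply]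
  right_inv B := by
    apply Subtype.ext
    show (e ⟨(e.symm ⟨B.1, B.2.2.1⟩).1, _⟩).1 = B.1
    rw [show (⟨(e.symm ⟨B.1, B.2.2.1⟩).1, (irr_map e.symm B.2).2.1⟩ : Cσ P)
        = e.symm ⟨B.1, B.2.2.1⟩ from Subtype.ext rfl, e.apply_symm_apply]
  map_rel_iff' {A B} := by
    show (e ⟨A.1, A.2.2.1⟩).1 ⊆ (e ⟨B.1, B.2.2.1⟩).1 ↔ A.1 ⊆ B.1
    exact (e.map_rel_iff (a := ⟨A.1, A.2.2.1⟩) (b := ⟨B.1, B.2.2.1⟩))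

/-- If every irreducible closed set is a principal downset, then `P ≅ Irrσ P`. -/
lemma exists_iso_irr (hs : ∀ A : Set P, IrrClosed A → ∃ x, A = Set.Iic x) :
    Nonempty (P ≃o Irrσ P) := by
  have hbij : Function.Bijective (fun x : P => (⟨Set.Iic x, irrClosed_Iic x⟩ : Irrσ P)) := by
    constructor
    · intro a b h
      exact Set.Iic_injective (congrArg Subtype.val h)
    · intro A
      obtain ⟨x, hx⟩ := hs A.1 A.2
      exact ⟨x, Subtype.ext hx.symm⟩
  exact ⟨{ toEquiv := Equiv.ofBijective _ hbij,
           map_rel_iff' := fun {a b} => Set.Iic_subset_Iic }⟩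

end Aux

/-- if `P` is a sober dcpo, `Q` is a bounded-sober dcpo and
`C_σ(P) ≅ C_σ(Q)`, then `P ≅ Q`. -/
theorem stmt6 {P Q : Type*} [PartialOrder P] [PartialOrder Q]
    (hP : Dcpo P) (hQ : Dcpo Q) (hsP : SoberD P) (hbQ : BoundedSoberD Q)
    (e : Cσ P ≃o Cσ Q) : Nonempty (P ≃o Q) := by
  obtain ⟨i1⟩ := exists_iso_irr (fun A hA => (hsP A hA).exists)
  let Φ : P ≃o Irrσ Q := i1.trans (irrIso e)
  -- the comparison map `f : Q → P`
  set f : Q → P := fun y => Φ.symm ⟨Set.Iic y, irrClosed_Iic y⟩ with hf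
  have hΦf : ∀ y : Q, Φ (f y) = ⟨Set.Iic y, irrClosed_Iic y⟩ := fun y =>
    Φ.apply_symm_apply _
  have fmono : ∀ {y z : Q}, f y ≤ f z ↔ y ≤ z := by
    intro y z
    rw [hf]
    simp only [Φ.symm.map_rel_iff]
    exact Iff.trans (Subtype.mk_le_mk) Set.Iic_subset_Iic
  have finj : Function.Injective f := fun y z h => by
    have := congrArg Subtype.val (congrArg Φ h)
    rw [hΦf, hΦf] at this
    exact Set.Iic_injective this
  -- (a) `f` sends lubs of directed sets to lubs
  have lubf : ∀ D : Set Q, D.Nonempty → DirectedOn (· ≤ ·) D →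
      ∀ d, IsLUB D d → IsLUB (f '' D) (f d) := by
    intro D hne hdir d hd
    constructor
    · rintro p ⟨y, hy, rfl⟩
      exact fmono.mpr (hd.1 hy)
    · intro p hp
      have hDp : D ⊆ (Φ p).1 := by
        intro y hy
        have h1 : f y ≤ p := hp ⟨y, hy, rfl⟩
        have h2 : Φ (f y) ≤ Φ p := Φ.map_rel_iff.mpr h1
        rw [hΦf] at h2
        exact h2 (le_refl y)
      have hdp : d ∈ (Φ p).1 := (Φ p).2.2.1.2 D hDp hne hdir d hd
      have h3 : Φ (f d) ≤ Φ p := by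
        rw [hΦf]
        exact fun z hz => (Φ p).2.2.1.1 hz hdp
      exact Φ.map_rel_iff.mp h3
  have imgdir : ∀ D : Set Q, DirectedOn (· ≤ ·) D → DirectedOn (· ≤ ·) (f '' D) := by
    rintro D hdir _ ⟨y, hy, rfl⟩ _ ⟨z, hz, rfl⟩
    obtain ⟨w, hw, h1, h2⟩ := hdir y hy z hz
    exact ⟨f w, ⟨w, hw, rfl⟩, fmono.mpr h1, fmono.mpr h2⟩
  -- key claim: every irreducible closed subset of Q is a principal downset
  have key : ∀ A : Set Q, IrrClosed A → ∃ y, A = Set.Iic y := by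
    intro A hA
    set S : Set P := f '' A with hS
    -- S is a lower set (uses bounded sobriety of Q)
    have hSlower : IsLowerSet S := by
      rintro a b hba ⟨y, hyA, rfl⟩
      have h1 : Φ b ≤ Φ (f y) := Φ.map_rel_iff.mpr hba
      rw [hΦf] at h1
      have hbd : ∃ c, ∀ x ∈ (Φ b).1, x ≤ c := ⟨y, fun x hx => h1 hx⟩
      obtain ⟨z, hz⟩ := hbQ (Φ b).1 (Φ b).2 hbd
      have hzy : z ≤ y := h1 (by rw [hz]; exact le_refl z)
      have hzA : z ∈ A := hA.2.1.1 hzy hyA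
      have hbz : b = f z := by
        apply Φ.injective
        rw [hΦf]
        exact Subtype.ext hz
      exact ⟨z, hzA, hbz.symm⟩
    -- S is closed under directed lubs
    have hSdir : ∀ D' ⊆ S, D'.Nonempty → DirectedOn (· ≤ ·) D' →
        ∀ a, IsLUB D' a → a ∈ S := by
      intro D' hD'S hne' hdir' a ha'
      set D : Set Q := {y | y ∈ A ∧ f y ∈ D'} with hD
      have himg : f '' D = D' := by
        apply Set.eq_of_subset_of_subset
        · rintro _ ⟨y, hy, rfl⟩
          exact hy.2
        · intro p hp
          obtain ⟨y, hyA, hyp⟩ := hD'S hp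
          exact ⟨y, ⟨hyA, by rw [hyp]; exact hp⟩, hyp⟩
      have hDne : D.Nonempty := by
        obtain ⟨p, hp⟩ := hne'
        obtain ⟨y, hy, -⟩ := himg ▸ hp
        exact ⟨y, hy⟩
      have hDdir : DirectedOn (· ≤ ·) D := by
        intro y hy z hz
        obtain ⟨c, hc, h1, h2⟩ := hdir' (f y) hy.2 (f z) hz.2
        obtain ⟨w, hw, hwc⟩ := himg ▸ hc
        refine ⟨w, hw, ?_, ?_⟩
        · exact fmono.mp (hwc ▸ h1)
        · exact fmono.mp (hwc ▸ h2)
      obtain ⟨d, hd⟩ := hQ D hDne hDdir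
      have hdA : d ∈ A := hA.2.1.2 D (fun y hy => hy.1) hDne hDdir d hd
      have : IsLUB D' (f d) := himg ▸ lubf D hDne hDdir d hd
      have had : a = f d := ha'.unique this
      exact ⟨d, hdA, had.symm⟩
    -- S is irreducible
    have hSirr : ∀ F₁ F₂ : Set P, ScottClosed F₁ → ScottClosed F₂ →
        S ⊆ F₁ ∪ F₂ → S ⊆ F₁ ∨ S ⊆ F₂ := by
      intro F₁ F₂ h₁ h₂ hsub
      have hG : ∀ F : Set P, ScottClosed F → ScottClosed (f ⁻¹' F) := by
        intro F hF
        constructor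
        · intro y z hzy hy
          exact hF.1 (fmono.mpr hzy) hy
        · intro D hDG hne hdir d hd
          have : f d ∈ F := hF.2 (f '' D) (by rintro _ ⟨y, hy, rfl⟩; exact hDG hy)
            (hne.image f) (imgdir D hdir) (f d) (lubf D hne hdir d hd)
          exact this
      have hAsub : A ⊆ (f ⁻¹' F₁) ∪ (f ⁻¹' F₂) := by
        intro y hy
        rcases hsub ⟨y, hy, rfl⟩ with h | h
        · exact Or.inl h
        · exact Or.inr h
      rcases hA.2.2 _ _ (hG F₁ h₁) (hG F₂ h₂) hAsub with h | h
      · exact Or.inl (by rintro _ ⟨y, hy, rfl⟩; exact h hy)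
      · exact Or.inr (by rintro _ ⟨y, hy, rfl⟩; exact h hy)
    -- apply sobriety of P to S
    obtain ⟨x, hx, -⟩ := hsP S ⟨hA.1.image f, ⟨hSlower, hSdir⟩, hSirr⟩
    have hxS : x ∈ S := by rw [hx]; exact le_refl x
    obtain ⟨y₀, hy₀A, hfy₀⟩ := hxS
    refine ⟨y₀, Set.eq_of_subset_of_subset ?_ ?_⟩
    · intro y hy
      have hyS : f y ∈ S := ⟨y, hy, rfl⟩
      rw [hx] at hyS
      exact fmono.mp (hfy₀ ▸ hyS)
    · intro z hz
      exact hA.2.1.1 hz hy₀A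
  obtain ⟨i3⟩ := exists_iso_irr key
  exact ⟨(i3.trans Φ.symm).symm⟩
end

section
/- Johnstone's dcpo X = ℕ × (ℕ ∪ {∞}) with order (m,n) ≤ (m',n') iff (m = m' and n ≤ n') or (n' = ∞ and n ≤ m') is a dcpo; X itself is an irreducible Scott closed set that is not the closure of any point; and every proper nonempty irreducible Scott closed subset of X is of the form ↓(m,n) for some (m,n) ∈ X. -/
/-- The carrier of Johnstone's dcpo: `ℕ × (ℕ ∪ {∞})`. -/
structure J where
  m : ℕ
  n : WithTop ℕ

/-- Johnstone's order: `(m,n) ≤ (m',n')` iff `m = m' ∧ n ≤ n'`, or `n' = ∞ ∧ n ≤ m'`. -/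
instance : PartialOrder J where
  le p q := (p.m = q.m ∧ p.n ≤ q.n) ∨ (q.n = ⊤ ∧ p.n ≤ (q.m : WithTop ℕ))
  le_refl p := Or.inl ⟨rfl, le_refl _⟩
  le_trans p q r hpq hqr := by
    rcases hpq with ⟨h1, h2⟩ | ⟨h1, h2⟩ <;> rcases hqr with ⟨h3, h4⟩ | ⟨h3, h4⟩
    · exact Or.inl ⟨h1.trans h3, h2.trans h4⟩
    · exact Or.inr ⟨h3, h2.trans h4⟩
    · exact Or.inr ⟨top_le_iff.mp (h1 ▸ h4), h3 ▸ h2⟩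
    · exact absurd (h1 ▸ h4) (not_le.mpr (WithTop.coe_lt_top r.m))
  le_antisymm p q hpq hqp := by
    obtain ⟨pm, pn⟩ := p; obtain ⟨qm, qn⟩ := q
    rcases hpq with ⟨h1, h2⟩ | ⟨h1, h2⟩ <;> rcases hqp with ⟨h3, h4⟩ | ⟨h3, h4⟩
    · simp only [J.mk.injEq]
      exact ⟨h1, le_antisymm h2 h4⟩
    · have hq : qn = ⊤ := top_le_iff.mp ((show pn = ⊤ from h3) ▸ h2)
      exact absurd (hq ▸ h4) (not_le.mpr (WithTop.coe_lt_top pm))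
    · have hp : pn = ⊤ := top_le_iff.mp ((show qn = ⊤ from h1) ▸ h4)
      exact absurd (hp ▸ h2) (not_le.mpr (WithTop.coe_lt_top qm))
    · exact absurd ((show qn = ⊤ from h1) ▸ h4) (not_le.mpr (WithTop.coe_lt_top pm))

lemma J.le_iff {x y : J} : x ≤ y ↔ (x.m = y.m ∧ x.n ≤ y.n) ∨ (y.n = ⊤ ∧ x.n ≤ (y.m : WithTop ℕ)) :=
  Iff.rfl

lemma not_top_le_coe (k : ℕ) : ¬ ((⊤ : WithTop ℕ) ≤ (k : WithTop ℕ)) :=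
  fun h => absurd h (not_le.mpr (WithTop.coe_lt_top k))

lemma exists_coe {x : WithTop ℕ} (h : x ≠ ⊤) : ∃ k : ℕ, x = ((k : ℕ) : WithTop ℕ) := by
  obtain ⟨k, hk⟩ := WithTop.ne_top_iff_exists.mp h
  exact ⟨k, hk.symm⟩

lemma scottClosed_Iic_s8 {P : Type*} [PartialOrder P] (p : P) : ScottClosed (Set.Iic p) :=
  ⟨fun _ _ h hx => le_trans h hx, fun _ hD _ _ _ ha => ha.2 fun _ hd => hD hd⟩

lemma directed_col (j : ℕ) :
    DirectedOn (· ≤ ·) (Set.range fun k : ℕ => (⟨j, (k : WithTop ℕ)⟩ : J)) := by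
  rintro _ ⟨k₁, rfl⟩ _ ⟨k₂, rfl⟩
  exact ⟨⟨j, ((max k₁ k₂ : ℕ) : WithTop ℕ)⟩, ⟨max k₁ k₂, rfl⟩,
    Or.inl ⟨rfl, WithTop.coe_le_coe.mpr (le_max_left _ _)⟩,
    Or.inl ⟨rfl, WithTop.coe_le_coe.mpr (le_max_right _ _)⟩⟩

lemma isLUB_col (j : ℕ) :
    IsLUB (Set.range fun k : ℕ => (⟨j, (k : WithTop ℕ)⟩ : J)) ⟨j, ⊤⟩ := by
  constructor
  · rintro _ ⟨k, rfl⟩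
    exact Or.inl ⟨rfl, le_top⟩
  · intro u hu
    have hun : u.n = ⊤ := by
      by_contra h
      obtain ⟨b, hb⟩ := exists_coe h
      rcases J.le_iff.mp (hu ⟨b + 1, rfl⟩) with ⟨_, h2⟩ | ⟨h1, _⟩
      · rw [hb] at h2
        have h2' : ((b + 1 : ℕ) : WithTop ℕ) ≤ ((b : ℕ) : WithTop ℕ) := h2
        have hbb : b + 1 ≤ b := by exact_mod_cast h2'
        omega
      · exact h h1
    have hum : u.m = j := by
      rcases J.le_iff.mp (hu ⟨u.m + 1, rfl⟩) with ⟨h1, _⟩ | ⟨_, h2⟩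
      · exact h1.symm
      · have h2' : ((u.m + 1 : ℕ) : WithTop ℕ) ≤ ((u.m : ℕ) : WithTop ℕ) := h2
        have hbb : u.m + 1 ≤ u.m := by exact_mod_cast h2'
        omega
    exact Or.inl ⟨hum.symm, hun.ge⟩

lemma full_of_infinite {A : Set J} (hA : ScottClosed A)
    (hT : {m : ℕ | (⟨m, ⊤⟩ : J) ∈ A}.Infinite) : A = Set.univ := by
  have hfin : ∀ (j k : ℕ), (⟨j, (k : WithTop ℕ)⟩ : J) ∈ A := by
    intro j k
    obtain ⟨m', hm', hk⟩ := hT.exists_gt k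
    exact hA.1 (Or.inr ⟨rfl, WithTop.coe_le_coe.mpr hk.le⟩) hm'
  have htop : ∀ j : ℕ, (⟨j, ⊤⟩ : J) ∈ A := fun j =>
    hA.2 (Set.range fun k : ℕ => (⟨j, (k : WithTop ℕ)⟩ : J))
      (by rintro _ ⟨k, rfl⟩; exact hfin j k) ⟨_, ⟨0, rfl⟩⟩ (directed_col j) _ (isLUB_col j)
  ext x
  simp only [Set.mem_univ, iff_true]
  obtain ⟨xm, xn⟩ := x
  by_cases hx : xn = ⊤
  · exact hx ▸ htop xm
  · obtain ⟨k, hk⟩ := WithTop.ne_top_iff_exists.mp hx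
    exact hk ▸ hfin xm k

lemma scottClosed_aux {A : Set J} (hA : ScottClosed A) (a c : ℕ)
    (hc : ∀ m : ℕ, (⟨m, ⊤⟩ : J) ∈ A → m ≤ c) :
    ScottClosed {x : J | x ∈ A ∧ (x.m ≠ a ∨ x.n ≤ (c : WithTop ℕ))} := by
  constructor
  · intro x y hyx hx
    refine ⟨hA.1 hyx hx.1, ?_⟩
    rcases J.le_iff.mp hyx with ⟨h1, h2⟩ | ⟨h1, h2⟩
    · rcases hx.2 with hm | hn
      · exact Or.inl (h1 ▸ hm)
      · exact Or.inr (h2.trans hn)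
    · have hx_top : (⟨x.m, ⊤⟩ : J) ∈ A := by rw [← h1]; exact hx.1
      exact Or.inr (h2.trans (WithTop.coe_le_coe.mpr (hc _ hx_top)))
  · intro D hD hne hdir q hq
    have hqA : q ∈ A := hA.2 D (fun d hd => (hD hd).1) hne hdir q hq
    refine ⟨hqA, ?_⟩
    by_cases hqm : q.m = a
    · by_cases hqn : q.n = ⊤
      · exfalso
        have hdn : ∀ d ∈ D, d.n ≤ ((max a c : ℕ) : WithTop ℕ) := by
          intro d hd
          rcases J.le_iff.mp (hq.1 hd) with ⟨h1, h2⟩ | ⟨h1, h2⟩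
          · rcases (hD hd).2 with h | h
            · exact absurd (h1.trans hqm) h
            · exact h.trans (WithTop.coe_le_coe.mpr (le_max_right a c))
          · rw [hqm] at h2
            exact h2.trans (WithTop.coe_le_coe.mpr (le_max_left a c))
        have hub : ∀ M : ℕ, max a c ≤ M → (⟨M, ⊤⟩ : J) ∈ upperBounds D := by
          intro M hM d hd
          exact Or.inr ⟨rfl, (hdn d hd).trans (WithTop.coe_le_coe.mpr hM)⟩
        have e1 : q.m = max a c := by
          rcases J.le_iff.mp (hq.2 (hub _ le_rfl)) with ⟨h1, _⟩ | ⟨_, h2⟩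
          · exact h1
          · exact absurd (hqn ▸ h2) (not_top_le_coe _)
        have e2 : q.m = max a c + 1 := by
          rcases J.le_iff.mp (hq.2 (hub _ (Nat.le_succ _))) with ⟨h1, _⟩ | ⟨_, h2⟩
          · exact h1
          · exact absurd (hqn ▸ h2) (not_top_le_coe _)
        omega
      · have hub : (⟨a, (c : WithTop ℕ)⟩ : J) ∈ upperBounds D := by
          intro d hd
          rcases J.le_iff.mp (hq.1 hd) with ⟨h1, h2⟩ | ⟨h1, h2⟩
          · rcases (hD hd).2 with h | h
            · exact absurd (h1.trans hqm) h
            · exact Or.inl ⟨h1.trans hqm, h⟩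
          · exact absurd h1 hqn
        rcases J.le_iff.mp (hq.2 hub) with ⟨_, h2⟩ | ⟨h1, _⟩
        · exact Or.inr h2
        · exact absurd h1 (WithTop.coe_ne_top)
    · exact Or.inl hqm

/-- Johnstone's poset is a dcpo; the whole space is an irreducible Scott
closed set which is not the closure (= principal downset) of any point; and every proper
nonempty irreducible Scott closed subset is a principal downset `↓(m,n)`. -/
theorem stmt8 :
    Dcpo J ∧ IrrClosed (Set.univ : Set J) ∧
    (∀ x : J, (Set.univ : Set J) ≠ Set.Iic x) ∧
    (∀ A : Set J, IrrClosed A → A ≠ Set.univ → ∃ p : J, A = Set.Iic p) := by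
  have hdcpo : Dcpo J := by
    intro D hne hdir
    by_cases htop : ∃ d ∈ D, d.n = ⊤
    · obtain ⟨d, hd, hdn⟩ := htop
      refine ⟨d, fun e he => ?_, fun u hu => hu hd⟩
      obtain ⟨z, hz, hez, hdz⟩ := hdir e he d hd
      rcases J.le_iff.mp hdz with ⟨h1, h2⟩ | ⟨h1, h2⟩
      · have hzn : z.n = ⊤ := top_le_iff.mp (hdn ▸ h2)
        have hzd : z = d := by
          obtain ⟨zm, zn⟩ := z; obtain ⟨dm, dn⟩ := d
          simp only [J.mk.injEq]
          exact ⟨h1.symm, hzn.trans hdn.symm⟩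
        exact hzd ▸ hez
      · exact absurd (hdn ▸ h2) (not_top_le_coe _)
    · push_neg at htop
      obtain ⟨d₀, hd₀⟩ := hne
      have hcol : ∀ d ∈ D, d.m = d₀.m := by
        intro d hd
        obtain ⟨z, hz, h1, h2⟩ := hdir d hd d₀ hd₀
        rcases J.le_iff.mp h1 with ⟨e1, _⟩ | ⟨e1, _⟩
        · rcases J.le_iff.mp h2 with ⟨e2, _⟩ | ⟨e2, _⟩
          · exact e1.trans e2.symm
          · exact absurd e2 (htop z hz)
        · exact absurd e1 (htop z hz)
      by_cases hbdd : BddAbove {k : ℕ | ∃ d ∈ D, d.n = (k : WithTop ℕ)}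
      · have hSne : {k : ℕ | ∃ d ∈ D, d.n = (k : WithTop ℕ)}.Nonempty := by
          obtain ⟨k₀, hk₀⟩ := exists_coe (htop d₀ hd₀)
          exact ⟨k₀, d₀, hd₀, hk₀⟩
        obtain ⟨dm, hdm, hdmn⟩ := Nat.sSup_mem hSne hbdd
        refine ⟨dm, fun e he => ?_, fun u hu => hu hdm⟩
        obtain ⟨k, hk⟩ := exists_coe (htop e he)
        have hkS : k ∈ {k : ℕ | ∃ d ∈ D, d.n = (k : WithTop ℕ)} := ⟨e, he, hk⟩
        refine Or.inl ⟨(hcol e he).trans (hcol dm hdm).symm, ?_⟩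
        rw [hk, hdmn]
        exact_mod_cast le_csSup hbdd hkS
      · rw [not_bddAbove_iff] at hbdd
        refine ⟨⟨d₀.m, ⊤⟩, fun e he => Or.inl ⟨hcol e he, le_top⟩, fun u hu => ?_⟩
        have hub : ∀ b : ℕ, ∃ d ∈ D, (b : WithTop ℕ) < d.n := by
          intro b
          obtain ⟨y, ⟨d, hd, hdy⟩, hby⟩ := hbdd b
          refine ⟨d, hd, ?_⟩
          rw [hdy]
          exact_mod_cast hby
        have hum : u.m = d₀.m := by
          by_contra hne'
          obtain ⟨d, hd, hlt⟩ := hub u.m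
          rcases J.le_iff.mp (hu hd) with ⟨h1, _⟩ | ⟨_, h2⟩
          · exact hne' (h1.symm.trans (hcol d hd))
          · exact absurd h2 (not_le.mpr hlt)
        have hun : u.n = ⊤ := by
          by_contra hne'
          obtain ⟨b, hb⟩ := exists_coe hne'
          obtain ⟨d, hd, hlt⟩ := hub b
          rcases J.le_iff.mp (hu hd) with ⟨_, h2⟩ | ⟨h1, _⟩
          · rw [hb] at h2
            exact absurd h2 (not_le.mpr hlt)
          · exact hne' h1
        exact Or.inl ⟨hum.symm, hun.ge⟩
  have hirr_univ : IrrClosed (Set.univ : Set J) := by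
    refine ⟨⟨⟨0, 0⟩, Set.mem_univ _⟩,
      ⟨fun _ _ _ _ => Set.mem_univ _, fun _ _ _ _ _ _ => Set.mem_univ _⟩, ?_⟩
    intro F₁ F₂ h₁ h₂ hcover
    by_cases hinf : {m : ℕ | (⟨m, ⊤⟩ : J) ∈ F₁}.Infinite
    · exact Or.inl (full_of_infinite h₁ hinf).ge
    · have h2inf : {m : ℕ | (⟨m, ⊤⟩ : J) ∈ F₂}.Infinite := by
        have hsub : {m : ℕ | (⟨m, ⊤⟩ : J) ∈ F₂} ∪ {m : ℕ | (⟨m, ⊤⟩ : J) ∈ F₁} = Set.univ := by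
          ext m
          simp only [Set.mem_union, Set.mem_setOf_eq, Set.mem_univ, iff_true]
          rcases hcover (Set.mem_univ (⟨m, ⊤⟩ : J)) with h | h
          · exact Or.inr h
          · exact Or.inl h
        intro hfin
        have hu := Set.infinite_univ (α := ℕ)
        rw [← hsub] at hu
        exact hu (hfin.union (Set.not_infinite.mp hinf))
      exact Or.inr (full_of_infinite h₂ h2inf).ge
  refine ⟨hdcpo, hirr_univ, ?_, ?_⟩
  · intro x hx
    have hmem : (⟨x.m + 1, ⊤⟩ : J) ∈ Set.Iic x := hx ▸ Set.mem_univ _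
    rcases J.le_iff.mp hmem with ⟨h1, _⟩ | ⟨_, h2⟩
    · exact Nat.succ_ne_self x.m h1
    · exact not_top_le_coe _ h2
  · intro A hA hAne
    obtain ⟨hAnonempty, hAclosed, hAirr⟩ := hA
    have hTfin : {m : ℕ | (⟨m, ⊤⟩ : J) ∈ A}.Finite := by
      by_contra h
      exact hAne (full_of_infinite hAclosed h)
    by_cases hex : ∃ m : ℕ, (⟨m, ⊤⟩ : J) ∈ A
    · obtain ⟨a, ha⟩ := hex
      obtain ⟨c, hc⟩ := hTfin.bddAbove
      refine ⟨⟨a, ⊤⟩, ?_⟩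
      have hsub := hAirr _ _ (scottClosed_Iic_s8 (⟨a, ⊤⟩ : J))
        (scottClosed_aux hAclosed a c (fun m hm => hc hm)) ?_
      · rcases hsub with h | h
        · refine Set.Subset.antisymm h (fun y hy => ?_)
          exact hAclosed.1 hy ha
        · rcases (h ha).2 with h' | h'
          · exact absurd rfl h'
          · exact absurd h' (not_top_le_coe c)
      · intro x hx
        by_cases hxm : x.m = a
        · exact Or.inl (Or.inl ⟨hxm, le_top⟩)
        · exact Or.inr ⟨hx, Or.inl hxm⟩
    · push_neg at hex
      obtain ⟨p₀, hp₀⟩ := hAnonempty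
      have hp₀n : p₀.n ≠ ⊤ := fun h => hex p₀.m (by rw [← h]; exact hp₀)
      obtain ⟨k₀, hk₀⟩ := exists_coe hp₀n
      have hSne : {k : ℕ | (⟨p₀.m, (k : WithTop ℕ)⟩ : J) ∈ A}.Nonempty := by
        refine ⟨k₀, ?_⟩
        show (⟨p₀.m, (k₀ : WithTop ℕ)⟩ : J) ∈ A
        rw [← hk₀]
        exact hp₀
      have hSbdd : BddAbove {k : ℕ | (⟨p₀.m, (k : WithTop ℕ)⟩ : J) ∈ A} := by
        by_contra hnb
        rw [not_bddAbove_iff] at hnb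
        have hall : ∀ k : ℕ, (⟨p₀.m, (k : WithTop ℕ)⟩ : J) ∈ A := by
          intro k
          obtain ⟨k', hk', hkk'⟩ := hnb k
          exact hAclosed.1 (show (⟨p₀.m, (k : WithTop ℕ)⟩ : J) ≤ ⟨p₀.m, (k' : WithTop ℕ)⟩ from
            Or.inl ⟨rfl, by show ((k : ℕ) : WithTop ℕ) ≤ ((k' : ℕ) : WithTop ℕ); exact_mod_cast hkk'.le⟩) hk'
        exact hex p₀.m (hAclosed.2 (Set.range fun k : ℕ => (⟨p₀.m, (k : WithTop ℕ)⟩ : J))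
          (by rintro _ ⟨k, rfl⟩; exact hall k) ⟨_, ⟨0, rfl⟩⟩
          (directed_col p₀.m) _ (isLUB_col p₀.m))
      have hh := Nat.sSup_mem hSne hSbdd
      set s := sSup {k : ℕ | (⟨p₀.m, (k : WithTop ℕ)⟩ : J) ∈ A} with hs
      refine ⟨⟨p₀.m, (s : WithTop ℕ)⟩, ?_⟩
      have hF₂ : ScottClosed {x : J | x ∈ A ∧ x.m ≠ p₀.m} := by
        constructor
        · intro x y hyx hx
          refine ⟨hAclosed.1 hyx hx.1, ?_⟩
          rcases J.le_iff.mp hyx with ⟨h1, _⟩ | ⟨h1, _⟩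
          · exact h1 ▸ hx.2
          · exact absurd (show (⟨x.m, ⊤⟩ : J) ∈ A by rw [← h1]; exact hx.1) (hex x.m)
        · intro D hD hne hdir q hq
          have hqA : q ∈ A := hAclosed.2 D (fun d hd => (hD hd).1) hne hdir q hq
          obtain ⟨d, hd⟩ := hne
          refine ⟨hqA, ?_⟩
          rcases J.le_iff.mp (hq.1 hd) with ⟨h1, _⟩ | ⟨h1, _⟩
          · exact h1 ▸ (hD hd).2
          · exact absurd (show (⟨q.m, ⊤⟩ : J) ∈ A by rw [← h1]; exact hqA) (hex q.m)
      have hcover : A ⊆ Set.Iic (⟨p₀.m, (s : WithTop ℕ)⟩ : J) ∪ {x : J | x ∈ A ∧ x.m ≠ p₀.m} := by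
        intro x hx
        by_cases hxm : x.m = p₀.m
        · have hxn : x.n ≠ ⊤ := fun h => hex x.m (by rw [← h]; exact hx)
          obtain ⟨k, hk⟩ := exists_coe hxn
          have hkS : k ∈ {k : ℕ | (⟨p₀.m, (k : WithTop ℕ)⟩ : J) ∈ A} := by
            show (⟨p₀.m, (k : WithTop ℕ)⟩ : J) ∈ A
            rw [← hxm, ← hk]
            exact hx
          refine Or.inl (Or.inl ⟨hxm, ?_⟩)
          rw [hk]
          show ((k : ℕ) : WithTop ℕ) ≤ ((s : ℕ) : WithTop ℕ)
          exact_mod_cast le_csSup hSbdd hkS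
        · exact Or.inr ⟨hx, hxm⟩
      rcases hAirr _ _ (scottClosed_Iic_s8 _) hF₂ hcover with h | h
      · exact Set.Subset.antisymm h (fun y hy => hAclosed.1 hy hh)
      · exact absurd rfl (h hp₀).2
end

section
/- Every C-compact element of a complete lattice is join-irreducible: if a is C-compact and a ≤ x ∨ y, then a ≤ x or a ≤ y. -/
/-- `x` is beneath `y`: for every nonempty Scott closed `S`, `y ≤ ⋁S` implies `x ∈ S`. -/
def Beneath {L : Type*} [CompleteLattice L] (x y : L) : Prop :=
  ∀ S : Set L, S.Nonempty → ScottClosed S → y ≤ sSup S → x ∈ S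

/-- An element is C-compact if it is beneath itself. -/
def CCompact {L : Type*} [CompleteLattice L] (x : L) : Prop := Beneath x x

lemma scottClosed_union_Iic {L : Type*} [CompleteLattice L] (x y : L) :
    ScottClosed (Set.Iic x ∪ Set.Iic y) := by
  constructor
  · exact (isLowerSet_Iic x).union (isLowerSet_Iic y)
  · intro D hD hne hdir a ha
    by_cases hx : ∀ d ∈ D, d ≤ x
    · exact Or.inl (ha.2 hx)
    · push_neg at hx
      obtain ⟨d₀, hd₀D, hd₀x⟩ := hx
      refine Or.inr (ha.2 fun d hd => ?_)
      obtain ⟨e, heD, hde, hd₀e⟩ := hdir d hd d₀ hd₀D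
      rcases hD heD with he | he
      · exact absurd (le_trans hd₀e he) hd₀x
      · exact le_trans hde he

/-- every C-compact element of a complete lattice is join-irreducible. -/
theorem stmt11 {L : Type*} [CompleteLattice L] (a : L) (ha : CCompact a)
    (x y : L) (h : a ≤ x ⊔ y) : a ≤ x ∨ a ≤ y := by
  have hS : ScottClosed (Set.Iic x ∪ Set.Iic y) := scottClosed_union_Iic x y
  have hne : (Set.Iic x ∪ Set.Iic y).Nonempty := ⟨x, Or.inl le_rfl⟩
  have hle : a ≤ sSup (Set.Iic x ∪ Set.Iic y) :=
    h.trans (sup_le (le_sSup (Or.inl le_rfl)) (le_sSup (Or.inr le_rfl)))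
  rcases ha _ hne hS hle with hm | hm
  · exact Or.inl hm
  · exact Or.inr hm
end

section
/- For every element x of a dcpo P, the principal downset ↓x is a C-compact element of the complete lattice C_σ(P) of Scott closed subsets of P. -/
/-- A Scott closed set `A` is a C-compact element of the complete lattice `C_σ(P)`:
for every nonempty Scott closed subset `S` of `C_σ(P)` with supremum `M`, `A ≤ M`
implies `A ∈ S`. -/
def CCompactIn {P : Type*} [PartialOrder P] (A : Cσ P) : Prop :=
  ∀ S : Set (Cσ P), S.Nonempty → ScottClosed S → ∀ M, IsLUB S M → A ≤ M → A ∈ S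

lemma iicScottClosed {P : Type*} [PartialOrder P] (y : P) : ScottClosed (Set.Iic y) := by
  constructor
  · intro a b hba ha
    exact le_trans hba ha
  · intro D hD _ _ a ha
    exact ha.2 hD

/-- for every `x` in a dcpo `P`, the principal downset `↓x` is a
C-compact element of `C_σ(P)`. -/
theorem stmt13 {P : Type*} [PartialOrder P] (hP : Dcpo P)
    (x : P) (A : Cσ P) (hAx : (A : Set P) = Set.Iic x) : CCompactIn A := by
  intro S hSne hSc M hM hAM
  -- The set of points whose principal downset lies in S
  set C : Set P := {y : P | (⟨Set.Iic y, iicScottClosed y⟩ : Cσ P) ∈ S} with hC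
  have hClower : IsLowerSet C := by
    intro a b hba ha
    exact hSc.1 (show Set.Iic b ⊆ Set.Iic a from fun z hz => le_trans hz hba) ha
  have hCclosed : ScottClosed C := by
    refine ⟨hClower, ?_⟩
    intro D hDC hDne hDdir a ha
    -- the family {Iic d : d ∈ D} is a directed subset of S with lub Iic a
    set F : Set (Cσ P) := (fun d : P => (⟨Set.Iic d, iicScottClosed d⟩ : Cσ P)) '' D with hF
    have hFS : F ⊆ S := by
      rintro _ ⟨d, hd, rfl⟩
      exact hDC hd
    have hFne : F.Nonempty := hDne.image _
    have hFdir : DirectedOn (· ≤ ·) F := by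
      rintro _ ⟨d₁, hd₁, rfl⟩ _ ⟨d₂, hd₂, rfl⟩
      obtain ⟨d, hd, h₁, h₂⟩ := hDdir d₁ hd₁ d₂ hd₂
      exact ⟨⟨Set.Iic d, iicScottClosed d⟩, ⟨d, hd, rfl⟩,
        fun z hz => le_trans hz h₁, fun z hz => le_trans hz h₂⟩
    have hFlub : IsLUB F (⟨Set.Iic a, iicScottClosed a⟩ : Cσ P) := by
      constructor
      · rintro _ ⟨d, hd, rfl⟩
        exact fun z hz => le_trans hz (ha.1 hd)
      · rintro ⟨E, hE⟩ hEub
        have hDE : D ⊆ E := by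
          intro d hd
          exact hEub (⟨d, hd, rfl⟩ : (⟨Set.Iic d, iicScottClosed d⟩ : Cσ P) ∈ F) le_rfl
        have haE : a ∈ E := hE.2 D hDE hDne hDdir a ha
        exact fun z hz => hE.1 hz haE
    exact hSc.2 F hFS hFne hFdir _ hFlub
  -- every member of S is a subset of C
  have hub : (⟨C, hCclosed⟩ : Cσ P) ∈ upperBounds S := by
    rintro ⟨B, hB⟩ hBS
    intro b hb
    have : Set.Iic b ⊆ B := fun z hz => hB.1 hz hb
    exact hSc.1 this hBS
  have hMC : (M : Set P) ⊆ C := hM.2 hub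
  have hxM : x ∈ (M : Set P) := by
    have := hAM
    rw [show (A ≤ M) = ((A : Set P) ⊆ (M : Set P)) from rfl, hAx] at this
    exact this le_rfl
  have hxC : x ∈ C := hMC hxM
  have : A = (⟨Set.Iic x, iicScottClosed x⟩ : Cσ P) := Subtype.ext hAx
  rw [this]
  exact hxC
end

section
/- A topological space X is both sober and T_D if and only if every irreducible closed subset of X is strongly irreducible (i.e., cannot be expressed as the supremum in the lattice of closed sets of any family of closed sets each strictly smaller than it). -/
/-- A space is sober if every nonempty irreducible closed set is the closure of a
unique point. -/
def SoberSp (X : Type*) [TopologicalSpace X] : Prop :=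
  ∀ F : Set X, IsClosed F → IsIrreducible F → ∃! x, F = closure {x}

/-- A space is `T_D` if every derived set `cl({x}) \ {x}` is closed. -/
def TD (X : Type*) [TopologicalSpace X] : Prop :=
  ∀ x : X, IsClosed (closure {x} \ {x})

/-- A closed set `F` is strongly irreducible if whenever `F` is the supremum in the
lattice of closed sets (i.e. the closure of the union) of a family of closed sets, then
`F` is one of them. -/
def StronglyIrreducible {X : Type*} [TopologicalSpace X] (F : Set X) : Prop :=
  ∀ 𝒜 : Set (Set X), (∀ A ∈ 𝒜, IsClosed A) → F = closure (⋃₀ 𝒜) → F ∈ 𝒜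

/-- a `T₀` space is sober and `T_D` iff every irreducible closed set is
strongly irreducible. -/
theorem stmt15 {X : Type*} [TopologicalSpace X] [T0Space X] :
    (SoberSp X ∧ TD X) ↔
      ∀ F : Set X, IsClosed F → IsIrreducible F → StronglyIrreducible F := by
  constructor
  · rintro ⟨hsob, htd⟩ F hFc hFi 𝒜 h𝒜c hF
    obtain ⟨x, hx, -⟩ := hsob F hFc hFi
    -- some A contains x
    by_cases hmem : ∃ A ∈ 𝒜, x ∈ A
    · obtain ⟨A, hA, hxA⟩ := hmem
      have hAF : A ⊆ F := by
        rw [hF]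
        exact subset_trans (Set.subset_sUnion_of_mem hA) subset_closure
      have hFA : F ⊆ A := by
        rw [hx]
        exact (h𝒜c A hA).closure_subset_iff.mpr (Set.singleton_subset_iff.mpr hxA)
      rwa [subset_antisymm hFA hAF]
    · exfalso
      push_neg at hmem
      have hsub : ⋃₀ 𝒜 ⊆ closure {x} \ {x} := by
        rintro y ⟨A, hA, hyA⟩
        refine ⟨?_, ?_⟩
        · have : A ⊆ F := by
            rw [hF]
            exact subset_trans (Set.subset_sUnion_of_mem hA) subset_closure
          exact hx ▸ this hyA
        · rintro rfl
          exact hmem A hA hyA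
      have : F ⊆ closure {x} \ {x} := by
        rw [hF]
        exact (htd x).closure_subset_iff.mpr hsub
      have hxF : x ∈ F := hx ▸ subset_closure rfl
      exact (this hxF).2 rfl
  · intro h
    have key : ∀ x : X, IsClosed (closure {x} \ {x}) := by
      intro x
      set 𝒜 : Set (Set X) := {A | IsClosed A ∧ A ⊆ closure {x} ∧ x ∉ A} with h𝒜
      set D := closure (⋃₀ 𝒜) with hD
      have hsub : ⋃₀ 𝒜 ⊆ closure {x} := by
        rintro y ⟨A, hA, hyA⟩
        exact hA.2.1 hyA
      have hDsub : D ⊆ closure {x} := isClosed_closure.closure_subset_iff.mpr hsub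
      have hxD : x ∉ D := by
        intro hxD
        have hDeq : D = closure {x} := subset_antisymm hDsub
          (closure_minimal (Set.singleton_subset_iff.mpr hxD) isClosed_closure)
        have hirr : IsIrreducible (closure ({x} : Set X)) :=
          isIrreducible_singleton.closure
        have := h (closure {x}) isClosed_closure hirr 𝒜 (fun A hA => hA.1) hDeq.symm
        exact this.2.2 (subset_closure rfl)
      have heq : D = closure {x} \ {x} := by
        apply subset_antisymm
        · exact fun y hy => ⟨hDsub hy, fun hxy => hxD (hxy ▸ hy)⟩
        · rintro y ⟨hy, hyx⟩
          have hcy : closure ({y} : Set X) ∈ 𝒜 := by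
            refine ⟨isClosed_closure, closure_minimal (Set.singleton_subset_iff.mpr hy)
              isClosed_closure, ?_⟩
            intro hxcy
            have h1 : y ⤳ x := specializes_iff_mem_closure.mpr hxcy
            have h2 : x ⤳ y := specializes_iff_mem_closure.mpr hy
            exact hyx (Set.mem_singleton_iff.mpr ((h1.antisymm h2).eq))
          exact subset_closure ⟨closure {y}, hcy, subset_closure rfl⟩
      rw [← heq]
      exact isClosed_closure
    refine ⟨?_, key⟩
    intro F hFc hFi
    set 𝒜 : Set (Set X) := (fun x => closure {x}) '' F with h𝒜
    have h1 : ∀ A ∈ 𝒜, IsClosed A := by rintro A ⟨y, hy, rfl⟩; exact isClosed_closure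
    have h2 : F = closure (⋃₀ 𝒜) := by
      apply subset_antisymm
      · intro y hy
        exact subset_closure ⟨closure {y}, ⟨y, hy, rfl⟩, subset_closure rfl⟩
      · apply hFc.closure_subset_iff.mpr
        rintro z ⟨A, ⟨y, hy, rfl⟩, hz⟩
        exact hFc.closure_subset_iff.mpr (Set.singleton_subset_iff.mpr hy) hz
    obtain ⟨x, hx, hFx⟩ := h F hFc hFi 𝒜 h1 h2
    have hFx' : F = closure {x} := hFx.symm
    refine ⟨x, hFx', ?_⟩
    intro y hy
    have hyF : y ∈ F := by rw [hy]; exact subset_closure rfl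
    have hxF : x ∈ F := by rw [hFx']; exact subset_closure rfl
    rw [hFx'] at hyF
    rw [hy] at hxF
    have h1 : x ⤳ y := specializes_iff_mem_closure.mpr hyF
    have h2 : y ⤳ x := specializes_iff_mem_closure.mpr hxF
    exact (h2.antisymm h1).eq
end

section
/- Kou's dcpo P is bounded-sober: every nonempty irreducible Scott closed subset of P that has an upper bound is the Scott closure of a single point. -/
/-- Validity predicate for points of Kou's dcpo: `inl x` with `0 < x ≤ 1` (the set `X`),
and `inr (k,a,b)` with `0 < k < 1`, `0 < b ≤ a ≤ 1` (the set `P₀`). -/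
def KouValid : ℝ ⊕ (ℝ × ℝ × ℝ) → Prop
  | .inl x => 0 < x ∧ x ≤ 1
  | .inr (k, a, b) => (0 < k ∧ k < 1) ∧ 0 < b ∧ b ≤ a ∧ a ≤ 1

/-- The carrier of Kou's dcpo `P = X ∪ P₀`. -/
def Kou := {p : ℝ ⊕ (ℝ × ℝ × ℝ) // KouValid p}

/-- Kou's order on raw points. -/
def kle : ℝ ⊕ (ℝ × ℝ × ℝ) → ℝ ⊕ (ℝ × ℝ × ℝ) → Prop
  | .inl x, .inl y => x = y
  | .inl _, .inr _ => False
  | .inr (k₁, a₁, b₁), .inr (k₂, a₂, b₂) => k₁ ≤ k₂ ∧ a₁ = a₂ ∧ b₁ = b₂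
  | .inr (k, _a, b), .inl x => _a = x ∨ (k * b ≤ x ∧ x < b)

instance : PartialOrder Kou where
  le p q := kle p.val q.val
  le_refl p := by
    obtain ⟨(x | ⟨k, a, b⟩), hv⟩ := p <;> simp [kle]
  le_trans p q r hpq hqr := by
    obtain ⟨pv, hp⟩ := p; obtain ⟨qv, hq⟩ := q; obtain ⟨rv, hr⟩ := r
    rcases pv with x | ⟨k₁, a₁, b₁⟩ <;> rcases qv with y | ⟨k₂, a₂, b₂⟩ <;>
      rcases rv with z | ⟨k₃, a₃, b₃⟩ <;>
      simp only [kle, KouValid] at hpq hqr hp hq hr ⊢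
    · exact hpq.trans hqr
    · subst hqr; exact hpq
    · obtain ⟨hk, ha, hb⟩ := hpq
      rcases hqr with h | ⟨h1, h2⟩
      · exact Or.inl (ha.trans h)
      · refine Or.inr ⟨le_trans ?_ h1, hb ▸ h2⟩
        calc k₁ * b₁ = k₁ * b₂ := by rw [hb]
          _ ≤ k₂ * b₂ := by nlinarith [hq.2.1]
    · obtain ⟨hk, ha, hb⟩ := hpq
      obtain ⟨hk', ha', hb'⟩ := hqr
      exact ⟨hk.trans hk', ha.trans ha', hb.trans hb'⟩
  le_antisymm p q hpq hqp := by
    obtain ⟨pv, hp⟩ := p; obtain ⟨qv, hq⟩ := q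
    rcases pv with x | ⟨k₁, a₁, b₁⟩ <;> rcases qv with y | ⟨k₂, a₂, b₂⟩ <;>
      simp only [kle, KouValid] at hpq hqp hp hq
    · subst hpq; rfl
    · obtain ⟨hk, ha, hb⟩ := hpq
      obtain ⟨hk', -, -⟩ := hqp
      subst ha; subst hb
      have hkk : k₁ = k₂ := le_antisymm hk hk'
      subst hkk; rfl

lemma Iic_scottClosed (p : Kou) : ScottClosed (Set.Iic p) :=
  ⟨fun _ _ hba ha => le_trans hba ha, fun D hD _ _ a ha => ha.2 fun _ hd => hD hd⟩

/-- Kou's dcpo is bounded-sober: every nonempty irreducible Scott closed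
subset with an upper bound is the Scott closure (= principal downset) of a point. -/
theorem stmt17 (A : Set Kou) (hA : IrrClosed A) (hbd : ∃ b : Kou, ∀ x ∈ A, x ≤ b) :
    ∃ x : Kou, A = Set.Iic x := by
  obtain ⟨hne, ⟨hlow, hdc⟩, hirr⟩ := hA
  obtain ⟨b, hb⟩ := hbd
  by_cases hX : ∃ q ∈ A, ∃ y, q.val = Sum.inl y
  · -- some point of X is in A; then it equals the bound and A = Iic b
    obtain ⟨q, hqA, y, hqy⟩ := hX
    have hqb : kle q.val b.val := hb q hqA
    have hbv : b.val = Sum.inl y := by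
      rcases hbval : b.val with z | ⟨k, a, c⟩
      · rw [hqy, hbval] at hqb
        simp only [kle] at hqb
        rw [hqb]
      · rw [hqy, hbval] at hqb
        exact absurd hqb (by simp [kle])
    have hqb' : q = b := Subtype.ext (by rw [hqy, hbv])
    exact ⟨b, Set.Subset.antisymm (fun r hr => hb r hr)
      (fun r hr => hlow hr (hqb' ▸ hqA))⟩
  · -- no point of X is in A
    push_neg at hX
    obtain ⟨p, hpA⟩ := hne
    rcases hpv : p.val with y | ⟨k₁, a₁, c₁⟩
    · exact absurd hpv (hX p hpA y)
    have hpval := p.property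
    rw [hpv] at hpval
    obtain ⟨⟨hk₁0, hk₁1⟩, hc₁0, hca, ha1⟩ := hpval
    -- the fiber over (a₁, c₁)
    set S : Set ℝ := {k | ∃ q ∈ A, q.val = Sum.inr (k, a₁, c₁)} with hSdef
    have hSmem : ∀ k ∈ S, 0 < k ∧ k < 1 := by
      rintro k ⟨q, hqA, hqv⟩
      have := q.property; rw [hqv] at this; exact this.1
    have hk₁S : k₁ ∈ S := ⟨p, hpA, hpv⟩
    have hSne : S.Nonempty := ⟨k₁, hk₁S⟩
    have hSbdd : BddAbove S := ⟨1, fun k hk => (hSmem k hk).2.le⟩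
    set s : ℝ := sSup S with hsdef
    have hs0 : 0 < s := lt_of_lt_of_le hk₁0 (le_csSup hSbdd hk₁S)
    have hs1 : s ≤ 1 := csSup_le hSne fun k hk => (hSmem k hk).2.le
    set D : Set Kou := {q | q ∈ A ∧ ∃ k, q.val = Sum.inr (k, a₁, c₁)} with hDdef
    have hpD : p ∈ D := ⟨hpA, k₁, hpv⟩
    have hDsub : D ⊆ A := fun q hq => hq.1
    have hdir : DirectedOn (· ≤ ·) D := by
      rintro q ⟨hqA, k, hqv⟩ r ⟨hrA, k', hrv⟩
      rcases le_total k k' with h | h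
      · refine ⟨r, ⟨hrA, k', hrv⟩, ?_, le_refl r⟩
        show kle q.val r.val
        rw [hqv, hrv]; exact ⟨h, rfl, rfl⟩
      · refine ⟨q, ⟨hqA, k, hqv⟩, le_refl q, ?_⟩
        show kle r.val q.val
        rw [hrv, hqv]; exact ⟨h, rfl, rfl⟩
    -- upper bound characterizations
    have key1 : ∀ u : Kou, (∀ q ∈ D, q ≤ u) → ∀ k a c, u.val = Sum.inr (k, a, c) →
        a = a₁ ∧ c = c₁ ∧ s ≤ k := by
      intro u hu k a c huv
      have hpu : kle p.val u.val := hu p hpD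
      rw [hpv, huv] at hpu
      obtain ⟨-, ha, hc⟩ := hpu
      refine ⟨ha.symm, hc.symm, csSup_le hSne ?_⟩
      rintro k' ⟨q, hqA, hqv⟩
      have hqu : kle q.val u.val := hu q ⟨hqA, k', hqv⟩
      rw [hqv, huv] at hqu
      exact hqu.1
    have key2 : ∀ u : Kou, (∀ q ∈ D, q ≤ u) → ∀ y, u.val = Sum.inl y → y ≠ a₁ →
        s * c₁ ≤ y ∧ y < c₁ := by
      intro u hu y huv hy
      have hstep : ∀ k' ∈ S, k' * c₁ ≤ y ∧ y < c₁ := by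
        rintro k' ⟨q, hqA, hqv⟩
        have hqu : kle q.val u.val := hu q ⟨hqA, k', hqv⟩
        rw [hqv, huv] at hqu
        rcases hqu with h | h
        · exact absurd h.symm hy
        · exact h
      have hylt : y < c₁ := (hstep k₁ hk₁S).2
      refine ⟨?_, hylt⟩
      have : s ≤ y / c₁ := csSup_le hSne fun k' hk' =>
        (le_div_iff₀ hc₁0).mpr (hstep k' hk').1
      exact (le_div_iff₀ hc₁0).mp this
    -- s < 1
    have hslt : s < 1 := by
      rcases lt_or_eq_of_le hs1 with h | h
      · exact h
      exfalso
      have ha₁0 : 0 < a₁ := lt_of_lt_of_le hc₁0 hca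
      set m₀ : Kou := ⟨Sum.inl a₁, ⟨ha₁0, ha1⟩⟩ with hm₀def
      have hlub : IsLUB D m₀ := by
        constructor
        · rintro q ⟨hqA, k, hqv⟩
          show kle q.val m₀.val
          rw [hqv]; exact Or.inl rfl
        · intro u hu
          rcases huv : u.val with z | ⟨k, a, c⟩
          · show kle m₀.val u.val
            rw [huv]
            show a₁ = z
            by_contra hz
            obtain ⟨h1, h2⟩ := key2 u hu z huv (fun hzz => hz hzz.symm)
            rw [h] at h1
            linarith
          · obtain ⟨-, -, hsk⟩ := key1 u hu k a c huv
            have := u.property; rw [huv] at this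
            have hk1 : k < 1 := this.1.2
            exfalso; rw [h] at hsk; linarith
      have : m₀ ∈ A := hdc D hDsub ⟨p, hpD⟩ hdir m₀ hlub
      exact hX m₀ this a₁ rfl
    -- the maximum of the fiber
    set m : Kou := ⟨Sum.inr (s, a₁, c₁), ⟨⟨hs0, hslt⟩, hc₁0, hca, ha1⟩⟩ with hmdef
    have hmLUB : IsLUB D m := by
      constructor
      · rintro q ⟨hqA, k, hqv⟩
        show kle q.val m.val
        rw [hqv]
        exact ⟨le_csSup hSbdd ⟨q, hqA, hqv⟩, rfl, rfl⟩
      · intro u hu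
        rcases huv : u.val with z | ⟨k, a, c⟩
        · show kle m.val u.val
          rw [huv]
          by_cases hz : a₁ = z
          · exact Or.inl hz
          · exact Or.inr (key2 u hu z huv (fun hzz => hz hzz.symm))
        · obtain ⟨ha, hc, hsk⟩ := key1 u hu k a c huv
          show kle m.val u.val
          rw [huv]
          exact ⟨hsk, ha.symm, hc.symm⟩
    have hmA : m ∈ A := hdc D hDsub ⟨p, hpD⟩ hdir m hmLUB
    -- the complement of the fiber in A
    set F₂ : Set Kou := {q | q ∈ A ∧ ¬∃ k, q.val = Sum.inr (k, a₁, c₁)} with hF₂def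
    have hF₂ : ScottClosed F₂ := by
      constructor
      · rintro q r hrq ⟨hqA, hqnf⟩
        refine ⟨hlow hrq hqA, ?_⟩
        rintro ⟨k, hrv⟩
        rcases hqv : q.val with z | ⟨k', a', c'⟩
        · exact hX q hqA z hqv
        · have hrq' : kle r.val q.val := hrq
          rw [hrv, hqv] at hrq'
          exact hqnf ⟨k', by rw [hqv, ← hrq'.2.1, ← hrq'.2.2]⟩
      · intro D' hD' hne' hdir' u hu
        refine ⟨hdc D' (fun q hq => (hD' hq).1) hne' hdir' u hu, ?_⟩
        rintro ⟨k, huv⟩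
        obtain ⟨d, hd⟩ := hne'
        have hdu : kle d.val u.val := hu.1 hd
        rcases hdv : d.val with z | ⟨k', a', c'⟩
        · exact hX d (hD' hd).1 z hdv
        · rw [hdv, huv] at hdu
          exact (hD' hd).2 ⟨k', by rw [hdv, hdu.2.1, hdu.2.2]⟩
    have hcover : A ⊆ Set.Iic m ∪ F₂ := by
      intro q hq
      by_cases hf : ∃ k, q.val = Sum.inr (k, a₁, c₁)
      · obtain ⟨k, hqv⟩ := hf
        left
        show kle q.val m.val
        rw [hqv]
        exact ⟨le_csSup hSbdd ⟨q, hq, hqv⟩, rfl, rfl⟩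
      · exact Or.inr ⟨hq, hf⟩
    rcases hirr (Set.Iic m) F₂ (Iic_scottClosed m) hF₂ hcover with h | h
    · exact ⟨m, Set.Subset.antisymm h (fun r hr => hlow hr hmA)⟩
    · exact absurd ⟨k₁, hpv⟩ (h hpA).2
end

section
/- In Kou's dcpo P, every element is the supremum of a directed set (indeed a chain) of down-linear elements: every element of P₀ is itself down-linear, and every x ∈ X satisfies x = ⋁{(k,x,x) : 0 < k < 1}, where each (k,x,x) is down-linear. -/
/-- in Kou's dcpo every element of `P₀` is down-linear, and every
`x ∈ X` is the supremum of the chain `{(k,x,x) : 0 < k < 1}` of down-linear elements. -/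
theorem stmt18 :
    (∀ p : Kou, (∃ t : ℝ × ℝ × ℝ, p.val = Sum.inr t) → DownLinear p) ∧
    (∀ (x : ℝ) (hx : 0 < x ∧ x ≤ 1),
      IsChain (· ≤ ·) {q : Kou | ∃ k : ℝ, 0 < k ∧ k < 1 ∧ q.val = Sum.inr (k, x, x)} ∧
      (∀ q ∈ {q : Kou | ∃ k : ℝ, 0 < k ∧ k < 1 ∧ q.val = Sum.inr (k, x, x)},
        DownLinear q) ∧
      IsLUB {q : Kou | ∃ k : ℝ, 0 < k ∧ k < 1 ∧ q.val = Sum.inr (k, x, x)}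
        (⟨Sum.inl x, hx⟩ : Kou)) := by
  have part1 : ∀ p : Kou, (∃ t : ℝ × ℝ × ℝ, p.val = Sum.inr t) → DownLinear p := by
    rintro ⟨pv, hp⟩ ⟨⟨k, a, b⟩, h⟩
    simp only at h; subst h
    rintro ⟨qv, hq⟩ hle ⟨rv, hr⟩ hle' hne
    rcases qv with y | ⟨k₁, a₁, b₁⟩
    · exact (show kle (Sum.inl y) (Sum.inr (k, a, b)) from hle).elim
    rcases rv with z | ⟨k₂, a₂, b₂⟩
    · exact (show kle (Sum.inl z) (Sum.inr (k, a, b)) from hle').elim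
    obtain ⟨hk1, ha1, hb1⟩ :=
      show kle (Sum.inr (k₁, a₁, b₁)) (Sum.inr (k, a, b)) from hle
    obtain ⟨hk2, ha2, hb2⟩ :=
      show kle (Sum.inr (k₂, a₂, b₂)) (Sum.inr (k, a, b)) from hle' 
    rcases le_total k₁ k₂ with h | h
    · exact Or.inl ⟨h, ha1.trans ha2.symm, hb1.trans hb2.symm⟩
    · exact Or.inr ⟨h, ha2.trans ha1.symm, hb2.trans hb1.symm⟩
  refine ⟨part1, fun x hx => ⟨?_, ?_, ?_, ?_⟩⟩
  · rintro ⟨qv, hq⟩ ⟨k₁, hk₁0, hk₁1, h₁⟩ ⟨rv, hr⟩ ⟨k₂, hk₂0, hk₂1, h₂⟩ hne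
    simp only at h₁ h₂; subst h₁; subst h₂
    rcases le_total k₁ k₂ with h | h
    · exact Or.inl ⟨h, rfl, rfl⟩
    · exact Or.inr ⟨h, rfl, rfl⟩
  · rintro q ⟨k, hk0, hk1, hq⟩
    exact part1 q ⟨(k, x, x), hq⟩
  · rintro ⟨qv, hq⟩ ⟨k, hk0, hk1, h⟩
    simp only at h; subst h
    exact Or.inl rfl
  · rintro ⟨qv, hq⟩ hub
    have key : ∀ k : ℝ, 0 < k → k < 1 →
        kle (Sum.inr (k, x, x)) qv := by
      intro k hk0 hk1
      have hv : KouValid (Sum.inr (k, x, x)) := ⟨⟨hk0, hk1⟩, hx.1, le_refl x, hx.2⟩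
      exact hub (show (⟨Sum.inr (k, x, x), hv⟩ : Kou) ∈ _ from ⟨k, hk0, hk1, rfl⟩)
    rcases qv with y | ⟨k₂, a₂, b₂⟩
    · show kle (Sum.inl x) (Sum.inl y)
      rcases key (1/2) (by norm_num) (by norm_num) with h | ⟨h1, h2⟩
      · exact h
      · exfalso
        have hy0 : 0 < y := hq.1
        have hxy : y < x := h2
        have hk0 : (0:ℝ) < (y + x) / (2 * x) := div_pos (by linarith) (by linarith [hx.1])
        have hk1 : (y + x) / (2 * x) < 1 := by
          rw [div_lt_one (by linarith [hx.1])]; linarith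
        rcases key _ hk0 hk1 with h | ⟨h1', h2'⟩
        · linarith
        · rw [div_mul_eq_mul_div, div_le_iff₀ (by linarith [hx.1] : (0:ℝ) < 2 * x)] at h1'
          nlinarith [hx.1]
    · exfalso
      obtain ⟨⟨hk₂0, hk₂1⟩, -⟩ := hq
      have := key ((k₂ + 1) / 2) (by linarith) (by linarith)
      obtain ⟨hle, -, -⟩ := this
      linarith
end
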